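/- Let I be an open real interval, α ∈ (1/2,1), K₁, K₂, c₁, c₂ ∈ ℝ, and let w : [0,1] × I → ℝ be C⁴. Suppose that for all (x,t) ∈ [0,1] × I: w_tt + w_xxxx − w_xxtt = 0, and for all t ∈ I: w(0,t) = w_x(0,t) = 0, w_xx(1,t) = −K₁ c₁, and w_xtt(1,t) − w_xxx(1,t) = −K₂ c₂. Define ϱ(t) = ∫₀¹ ( w_t(x w_x − α w) + w_xt[(1−α)w_x + x w_xx] ) dx. Then for all t ∈ I: ϱ'(t) = ½ w_t(1,t)² − (½+α)∫₀¹ w_t² dx − (α−½)∫₀¹ w_xt² dx + ½ w_xt(1,t)² − (3/2−α)∫₀¹ w_xx² dx − ½ w_xx(1,t)² − K₂ c₂ w_x(1,t) + K₂ α c₂ w(1,t) − K₁(1−α) c₁ w_x(1,t) + K₁² c₁². -/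

import Mathlib

open Real Set

/-- `w_t`: partial derivative of `w` in time. -/
noncomputable def pt (w : ℝ → ℝ → ℝ) (x t : ℝ) : ℝ := deriv (fun s => w x s) t

/-- `w_x`: partial derivative of `w` in space. -/
noncomputable def px (w : ℝ → ℝ → ℝ) (x t : ℝ) : ℝ := deriv (fun y => w y t) x

/-- `w_tt`. -/
noncomputable def ptt (w : ℝ → ℝ → ℝ) (x t : ℝ) : ℝ := deriv (fun s => pt w x s) t

/-- `w_xt`: spatial derivative of `w_t`. -/
noncomputable def pxt (w : ℝ → ℝ → ℝ) (x t : ℝ) : ℝ := deriv (fun y => pt w y t) x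

/-- `w_xx`. -/
noncomputable def pxx (w : ℝ → ℝ → ℝ) (x t : ℝ) : ℝ := deriv (fun y => px w y t) x

/-- `w_xxx`. -/
noncomputable def pxxx (w : ℝ → ℝ → ℝ) (x t : ℝ) : ℝ := deriv (fun y => pxx w y t) x

/-- `w_xxxx`. -/
noncomputable def pxxxx (w : ℝ → ℝ → ℝ) (x t : ℝ) : ℝ := deriv (fun y => pxxx w y t) x

/-- `w_xtt`: time derivative of `w_xt`. -/
noncomputable def pxtt (w : ℝ → ℝ → ℝ) (x t : ℝ) : ℝ := deriv (fun s => pxt w x s) t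

/-- `w_xxtt`: second spatial derivative of `w_tt`. -/
noncomputable def pxxtt (w : ℝ → ℝ → ℝ) (x t : ℝ) : ℝ :=
  deriv (fun y => deriv (fun z => ptt w z t) y) x

/-- The energy E(t) = ½∫₀¹ w_t² + ½∫₀¹ w_xx² + ½∫₀¹ w_xt² dx. -/
noncomputable def energy (w : ℝ → ℝ → ℝ) (t : ℝ) : ℝ :=
  (1/2) * (∫ x in (0:ℝ)..1, (pt w x t) ^ 2)
    + (1/2) * (∫ x in (0:ℝ)..1, (pxx w x t) ^ 2)
    + (1/2) * (∫ x in (0:ℝ)..1, (pxt w x t) ^ 2)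

/-- The auxiliary functional ϱ(t) = ∫₀¹ ( w_t(x w_x − α w) + w_xt[(1−α)w_x + x w_xx] ) dx. -/
noncomputable def rhoFun (w : ℝ → ℝ → ℝ) (α : ℝ) (t : ℝ) : ℝ :=
  ∫ x in (0:ℝ)..1,
    (pt w x t * (x * px w x t - α * w x t)
      + pxt w x t * ((1 - α) * px w x t + x * pxx w x t))

noncomputable def DD (v : ℝ × ℝ) (g : ℝ × ℝ → ℝ) : ℝ × ℝ → ℝ := fun p => fderiv ℝ g p v

lemma DD_contDiff {g : ℝ × ℝ → ℝ} {v : ℝ × ℝ} {n : ℕ} (hg : ContDiff ℝ (n+1 : ℕ) g) :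
    ContDiff ℝ (n : ℕ) (DD v g) := by
  have : ((n : WithTop ℕ∞) + 1) ≤ ((n+1 : ℕ) : WithTop ℕ∞) := by
    push_cast; exact le_refl _
  exact (hg.fderiv_right this).clm_apply contDiff_const

lemma DD_swap {g : ℝ × ℝ → ℝ} (hg : ContDiff ℝ 2 g) (u v : ℝ × ℝ) :
    DD u (DD v g) = DD v (DD u g) := by
  funext p
  have hd : DifferentiableAt ℝ (fderiv ℝ g) p := by
    have h1 : ContDiff ℝ 1 (fderiv ℝ g) := hg.fderiv_right (by norm_num)
    exact (h1.differentiable (by norm_num)).differentiableAt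
  have hsymm : IsSymmSndFDerivAt ℝ g p := (hg.contDiffAt).isSymmSndFDerivAt (by simp)
  have key : ∀ a b : ℝ × ℝ, DD a (DD b g) p = fderiv ℝ (fderiv ℝ g) p a b := by
    intro a b
    have := fderiv_clm_apply hd (differentiableAt_const b)
    change fderiv ℝ (fun y => (fderiv ℝ g y) b) p a = _
    rw [this]
    simp
  rw [key, key, hsymm u v]

lemma hasDerivAt_slice_x {g : ℝ × ℝ → ℝ} {x t : ℝ} (hg : DifferentiableAt ℝ g (x, t)) :
    HasDerivAt (fun y => g (y, t)) (DD (1, 0) g (x, t)) x := by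
  have h1 : HasDerivAt (fun y : ℝ => (y, t)) ((1 : ℝ), (0 : ℝ)) x :=
    (hasDerivAt_id x).prodMk (hasDerivAt_const x t)
  exact hg.hasFDerivAt.comp_hasDerivAt x h1

lemma hasDerivAt_slice_t {g : ℝ × ℝ → ℝ} {x t : ℝ} (hg : DifferentiableAt ℝ g (x, t)) :
    HasDerivAt (fun s => g (x, s)) (DD (0, 1) g (x, t)) t := by
  have h1 : HasDerivAt (fun s : ℝ => (x, s)) ((0 : ℝ), (1 : ℝ)) t :=
    (hasDerivAt_const t x).prodMk (hasDerivAt_id t)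
  exact hg.hasFDerivAt.comp_hasDerivAt t h1

section Towers

variable {w : ℝ → ℝ → ℝ} (hw : ContDiff ℝ 4 (Function.uncurry w))

local notation "f" => Function.uncurry w

include hw

lemma hw4 : ContDiff ℝ ((4:ℕ) : WithTop ℕ∞) f := by exact_mod_cast hw

lemma hw3 (v : ℝ × ℝ) : ContDiff ℝ ((3:ℕ) : WithTop ℕ∞) (DD v f) := DD_contDiff (hw4 hw)

lemma hw2 (u v : ℝ × ℝ) : ContDiff ℝ ((2:ℕ) : WithTop ℕ∞) (DD u (DD v f)) :=
  DD_contDiff (hw3 hw v)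

lemma hw1 (u v z : ℝ × ℝ) : ContDiff ℝ ((1:ℕ) : WithTop ℕ∞) (DD u (DD v (DD z f))) :=
  DD_contDiff (hw2 hw v z)

lemma hw0 (u v z z' : ℝ × ℝ) : ContDiff ℝ ((0:ℕ) : WithTop ℕ∞) (DD u (DD v (DD z (DD z' f)))) :=
  DD_contDiff (hw1 hw v z z')

lemma dw (p : ℝ × ℝ) : DifferentiableAt ℝ f p :=
  ((hw4 hw).differentiable (by norm_num)).differentiableAt

lemma dw3 (v : ℝ × ℝ) (p : ℝ × ℝ) : DifferentiableAt ℝ (DD v f) p :=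
  (((hw3 hw v)).differentiable (by norm_num)).differentiableAt

lemma dw2 (u v : ℝ × ℝ) (p : ℝ × ℝ) : DifferentiableAt ℝ (DD u (DD v f)) p :=
  (((hw2 hw u v)).differentiable (by norm_num)).differentiableAt

lemma dw1 (u v z : ℝ × ℝ) (p : ℝ × ℝ) : DifferentiableAt ℝ (DD u (DD v (DD z f))) p :=
  (((hw1 hw u v z)).differentiable (by norm_num)).differentiableAt

lemma ept (x t : ℝ) : pt w x t = DD (0,1) f (x, t) :=
  (hasDerivAt_slice_t (dw hw (x, t))).deriv

lemma epx (x t : ℝ) : px w x t = DD (1,0) f (x, t) :=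
  (hasDerivAt_slice_x (dw hw (x, t))).deriv

lemma eptt (x t : ℝ) : ptt w x t = DD (0,1) (DD (0,1) f) (x, t) := by
  have : (fun s => pt w x s) = fun s => DD (0,1) f (x, s) := funext fun s => ept hw x s
  rw [ptt, this]
  exact (hasDerivAt_slice_t (dw3 hw (0,1) (x, t))).deriv

lemma epxt (x t : ℝ) : pxt w x t = DD (1,0) (DD (0,1) f) (x, t) := by
  have : (fun y => pt w y t) = fun y => DD (0,1) f (y, t) := funext fun y => ept hw y t
  rw [pxt, this]
  exact (hasDerivAt_slice_x (dw3 hw (0,1) (x, t))).deriv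

lemma epxx (x t : ℝ) : pxx w x t = DD (1,0) (DD (1,0) f) (x, t) := by
  have : (fun y => px w y t) = fun y => DD (1,0) f (y, t) := funext fun y => epx hw y t
  rw [pxx, this]
  exact (hasDerivAt_slice_x (dw3 hw (1,0) (x, t))).deriv

lemma epxxx (x t : ℝ) : pxxx w x t = DD (1,0) (DD (1,0) (DD (1,0) f)) (x, t) := by
  have : (fun y => pxx w y t) = fun y => DD (1,0) (DD (1,0) f) (y, t) :=
    funext fun y => epxx hw y t
  rw [pxxx, this]
  exact (hasDerivAt_slice_x (dw2 hw (1,0) (1,0) (x, t))).deriv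

lemma epxxxx (x t : ℝ) :
    pxxxx w x t = DD (1,0) (DD (1,0) (DD (1,0) (DD (1,0) f))) (x, t) := by
  have : (fun y => pxxx w y t) = fun y => DD (1,0) (DD (1,0) (DD (1,0) f)) (y, t) :=
    funext fun y => epxxx hw y t
  rw [pxxxx, this]
  exact (hasDerivAt_slice_x (dw1 hw (1,0) (1,0) (1,0) (x, t))).deriv

lemma epxtt (x t : ℝ) : pxtt w x t = DD (0,1) (DD (1,0) (DD (0,1) f)) (x, t) := by
  have : (fun s => pxt w x s) = fun s => DD (1,0) (DD (0,1) f) (x, s) :=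
    funext fun s => epxt hw x s
  rw [pxtt, this]
  exact (hasDerivAt_slice_t (dw2 hw (1,0) (0,1) (x, t))).deriv

lemma epxxtt (x t : ℝ) :
    pxxtt w x t = DD (1,0) (DD (1,0) (DD (0,1) (DD (0,1) f))) (x, t) := by
  have h1 : ∀ y s : ℝ, deriv (fun z => ptt w z s) y = DD (1,0) (DD (0,1) (DD (0,1) f)) (y, s) := by
    intro y s
    have : (fun z => ptt w z s) = fun z => DD (0,1) (DD (0,1) f) (z, s) :=
      funext fun z => eptt hw z s
    rw [this]
    exact (hasDerivAt_slice_x (dw2 hw (0,1) (0,1) (y, s))).deriv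
  have : (fun y => deriv (fun z => ptt w z t) y) = fun y => DD (1,0) (DD (0,1) (DD (0,1) f)) (y, t) :=
    funext fun y => h1 y t
  rw [pxxtt, this]
  exact (hasDerivAt_slice_x (dw1 hw (1,0) (0,1) (0,1) (x, t))).deriv

end Towers

section Swaps

variable {w : ℝ → ℝ → ℝ} (hw : ContDiff ℝ 4 (Function.uncurry w))

local notation "f" => Function.uncurry w

include hw

lemma sw1 : DD (0,1) (DD (1,0) f) = DD (1,0) (DD (0,1) f) :=
  DD_swap ((hw4 hw).of_le (by norm_num)) (0,1) (1,0)

lemma sw2 : DD (0,1) (DD (1,0) (DD (1,0) f)) = DD (1,0) (DD (1,0) (DD (0,1) f)) := by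
  have h := DD_swap ((hw3 hw (1,0)).of_le (by norm_num)) (0,1) (1,0)
  rw [h, sw1 hw]

lemma sw3 : DD (1,0) (DD (0,1) (DD (1,0) (DD (0,1) f)))
    = DD (1,0) (DD (1,0) (DD (0,1) (DD (0,1) f))) := by
  have h := DD_swap ((hw3 hw (0,1)).of_le (by norm_num)) (0,1) (1,0)
  rw [h]

end Swaps

/-- The integrand of ϱ in directional-derivative language, as a joint function. -/
noncomputable def PhiJ (w : ℝ → ℝ → ℝ) (α : ℝ) (p : ℝ × ℝ) : ℝ :=
  DD (0,1) (Function.uncurry w) p *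
      (p.1 * DD (1,0) (Function.uncurry w) p - α * Function.uncurry w p)
    + DD (1,0) (DD (0,1) (Function.uncurry w)) p *
      ((1 - α) * DD (1,0) (Function.uncurry w) p
        + p.1 * DD (1,0) (DD (1,0) (Function.uncurry w)) p)

/-- Time derivative of the integrand. -/
noncomputable def PhiJ' (w : ℝ → ℝ → ℝ) (α : ℝ) (p : ℝ × ℝ) : ℝ :=
  DD (0,1) (DD (0,1) (Function.uncurry w)) p *
      (p.1 * DD (1,0) (Function.uncurry w) p - α * Function.uncurry w p)
    + DD (0,1) (Function.uncurry w) p *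
      (p.1 * DD (0,1) (DD (1,0) (Function.uncurry w)) p
        - α * DD (0,1) (Function.uncurry w) p)
    + DD (0,1) (DD (1,0) (DD (0,1) (Function.uncurry w))) p *
      ((1 - α) * DD (1,0) (Function.uncurry w) p
        + p.1 * DD (1,0) (DD (1,0) (Function.uncurry w)) p)
    + DD (1,0) (DD (0,1) (Function.uncurry w)) p *
      ((1 - α) * DD (0,1) (DD (1,0) (Function.uncurry w)) p
        + p.1 * DD (0,1) (DD (1,0) (DD (1,0) (Function.uncurry w))) p)

section PhiFacts

variable {w : ℝ → ℝ → ℝ} (hw : ContDiff ℝ 4 (Function.uncurry w)) (α : ℝ)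

local notation "f" => Function.uncurry w

include hw

lemma contPhiJ : Continuous (PhiJ w α) := by
  have c0 : Continuous f := hw.continuous
  have c1 : Continuous (DD ((1:ℝ),(0:ℝ)) f) := (hw3 hw _).continuous
  have c2 : Continuous (DD ((0:ℝ),(1:ℝ)) f) := (hw3 hw _).continuous
  have c12 : Continuous (DD ((1:ℝ),(0:ℝ)) (DD ((0:ℝ),(1:ℝ)) f)) := (hw2 hw _ _).continuous
  have c11 : Continuous (DD ((1:ℝ),(0:ℝ)) (DD ((1:ℝ),(0:ℝ)) f)) := (hw2 hw _ _).continuous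
  unfold PhiJ
  fun_prop

lemma contPhiJ' : Continuous (PhiJ' w α) := by
  have c0 : Continuous f := hw.continuous
  have c1 : Continuous (DD ((1:ℝ),(0:ℝ)) f) := (hw3 hw _).continuous
  have c2 : Continuous (DD ((0:ℝ),(1:ℝ)) f) := (hw3 hw _).continuous
  have c12 : Continuous (DD ((1:ℝ),(0:ℝ)) (DD ((0:ℝ),(1:ℝ)) f)) := (hw2 hw _ _).continuous
  have c21 : Continuous (DD ((0:ℝ),(1:ℝ)) (DD ((1:ℝ),(0:ℝ)) f)) := (hw2 hw _ _).continuous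
  have c22 : Continuous (DD ((0:ℝ),(1:ℝ)) (DD ((0:ℝ),(1:ℝ)) f)) := (hw2 hw _ _).continuous
  have c11 : Continuous (DD ((1:ℝ),(0:ℝ)) (DD ((1:ℝ),(0:ℝ)) f)) := (hw2 hw _ _).continuous
  have c212 : Continuous (DD ((0:ℝ),(1:ℝ)) (DD ((1:ℝ),(0:ℝ)) (DD ((0:ℝ),(1:ℝ)) f))) :=
    (hw1 hw _ _ _).continuous
  have c211 : Continuous (DD ((0:ℝ),(1:ℝ)) (DD ((1:ℝ),(0:ℝ)) (DD ((1:ℝ),(0:ℝ)) f))) :=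
    (hw1 hw _ _ _).continuous
  unfold PhiJ'
  fun_prop

lemma hasDerivAt_PhiJ (x t : ℝ) :
    HasDerivAt (fun s => PhiJ w α (x, s)) (PhiJ' w α (x, t)) t := by
  have h0 : HasDerivAt (fun s => f (x, s)) (DD (0,1) f (x,t)) t :=
    hasDerivAt_slice_t (dw hw _)
  have h1 : HasDerivAt (fun s => DD (1,0) f (x, s)) (DD (0,1) (DD (1,0) f) (x,t)) t :=
    hasDerivAt_slice_t (dw3 hw _ _)
  have h2 : HasDerivAt (fun s => DD (0,1) f (x, s)) (DD (0,1) (DD (0,1) f) (x,t)) t :=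
    hasDerivAt_slice_t (dw3 hw _ _)
  have h12 : HasDerivAt (fun s => DD (1,0) (DD (0,1) f) (x, s))
      (DD (0,1) (DD (1,0) (DD (0,1) f)) (x,t)) t := hasDerivAt_slice_t (dw2 hw _ _ _)
  have h11 : HasDerivAt (fun s => DD (1,0) (DD (1,0) f) (x, s))
      (DD (0,1) (DD (1,0) (DD (1,0) f)) (x,t)) t := hasDerivAt_slice_t (dw2 hw _ _ _)
  have H :=
    (h2.mul ((h1.const_mul x).sub (h0.const_mul α))).add
      (h12.mul ((h1.const_mul (1-α)).add (h11.const_mul x)))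
  have e1 : (fun s => PhiJ w α (x, s)) =
      fun s => DD (0,1) f (x,s) * (x * DD (1,0) f (x,s) - α * f (x,s))
        + DD (1,0) (DD (0,1) f) (x,s) *
          ((1-α) * DD (1,0) f (x,s) + x * DD (1,0) (DD (1,0) f) (x,s)) := rfl
  rw [e1]
  refine H.congr_deriv ?_
  simp only [PhiJ']
  simp only [Pi.add_apply, Pi.sub_apply, Pi.mul_apply, Pi.pow_apply]
  ring

end PhiFacts

section RhoDeriv

variable {w : ℝ → ℝ → ℝ} (hw : ContDiff ℝ 4 (Function.uncurry w)) (α : ℝ)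

local notation "f" => Function.uncurry w

include hw

lemma rho_eq : rhoFun w α = fun t => ∫ x in (0:ℝ)..1, PhiJ w α (x, t) := by
  funext t
  unfold rhoFun
  apply intervalIntegral.integral_congr
  intro x _
  simp only [PhiJ, ept hw, epx hw, epxt hw, epxx hw]
  rfl

lemma hasDerivAt_rho (t₀ : ℝ) :
    HasDerivAt (rhoFun w α) (∫ x in (0:ℝ)..1, PhiJ' w α (x, t₀)) t₀ := by
  rw [rho_eq hw]
  obtain ⟨C, hC⟩ : ∃ C, ∀ p ∈ Icc (0:ℝ) 1 ×ˢ Icc (t₀-1) (t₀+1), ‖PhiJ' w α p‖ ≤ C :=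
    (isCompact_Icc.prod isCompact_Icc).exists_bound_of_continuousOn
      ((contPhiJ' hw α).continuousOn)
  have cslice : ∀ t : ℝ, Continuous (fun x => PhiJ w α (x, t)) := fun t =>
    (contPhiJ hw α).comp (continuous_id.prodMk continuous_const)
  have cslice' : ∀ t : ℝ, Continuous (fun x => PhiJ' w α (x, t)) := fun t =>
    (contPhiJ' hw α).comp (continuous_id.prodMk continuous_const)
  have key := intervalIntegral.hasDerivAt_integral_of_dominated_loc_of_deriv_le
    (F := fun t x => PhiJ w α (x, t)) (F' := fun t x => PhiJ' w α (x, t))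
    (x₀ := t₀) (s := Metric.ball t₀ 1) (bound := fun _ => C) (a := 0) (b := 1) (μ := MeasureTheory.volume)
    (Metric.ball_mem_nhds t₀ one_pos)
    (Filter.Eventually.of_forall fun t => (cslice t).aestronglyMeasurable)
    ((cslice t₀).intervalIntegrable 0 1)
    ((cslice' t₀).aestronglyMeasurable)
    (Filter.Eventually.of_forall fun x hx t ht => by
      have hx' : x ∈ Icc (0:ℝ) 1 := by
        rw [Set.uIoc_of_le (by norm_num : (0:ℝ) ≤ 1)] at hx
        exact Ioc_subset_Icc_self hx
      have ht' : t ∈ Icc (t₀-1) (t₀+1) := by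
        rw [Metric.mem_ball, Real.dist_eq, abs_sub_lt_iff] at ht
        constructor <;> linarith [ht.1, ht.2]
      exact hC (x, t) ⟨hx', ht'⟩)
    (intervalIntegrable_const)
    (Filter.Eventually.of_forall fun x _ t _ => hasDerivAt_PhiJ hw α x t)
  exact key.2

end RhoDeriv

/-- Antiderivative (in x) used for the multiplier identity. -/
noncomputable def HFun (w : ℝ → ℝ → ℝ) (α t x : ℝ) : ℝ :=
  (1/2) * x * (DD (0,1) (Function.uncurry w) (x,t))^2
  + (1/2) * x * (DD (1,0) (DD (0,1) (Function.uncurry w)) (x,t))^2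
  + (DD (0,1) (DD (1,0) (DD (0,1) (Function.uncurry w))) (x,t)
      - DD (1,0) (DD (1,0) (DD (1,0) (Function.uncurry w))) (x,t))
    * (x * DD (1,0) (Function.uncurry w) (x,t) - α * Function.uncurry w (x,t))
  + (1-α) * DD (1,0) (DD (1,0) (Function.uncurry w)) (x,t)
      * DD (1,0) (Function.uncurry w) (x,t)
  + (1/2) * x * (DD (1,0) (DD (1,0) (Function.uncurry w)) (x,t))^2

/-- Derivative in x of `HFun`. -/
noncomputable def HFun' (w : ℝ → ℝ → ℝ) (α t x : ℝ) : ℝ :=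
  (1/2) * (DD (0,1) (Function.uncurry w) (x,t))^2
  + x * DD (0,1) (Function.uncurry w) (x,t) * DD (1,0) (DD (0,1) (Function.uncurry w)) (x,t)
  + (1/2) * (DD (1,0) (DD (0,1) (Function.uncurry w)) (x,t))^2
  + x * DD (1,0) (DD (0,1) (Function.uncurry w)) (x,t)
      * DD (1,0) (DD (1,0) (DD (0,1) (Function.uncurry w)))  (x,t)
  + (DD (1,0) (DD (0,1) (DD (1,0) (DD (0,1) (Function.uncurry w)))) (x,t)
      - DD (1,0) (DD (1,0) (DD (1,0) (DD (1,0) (Function.uncurry w)))) (x,t))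
    * (x * DD (1,0) (Function.uncurry w) (x,t) - α * Function.uncurry w (x,t))
  + (DD (0,1) (DD (1,0) (DD (0,1) (Function.uncurry w))) (x,t)
      - DD (1,0) (DD (1,0) (DD (1,0) (Function.uncurry w))) (x,t))
    * (DD (1,0) (Function.uncurry w) (x,t)
        + x * DD (1,0) (DD (1,0) (Function.uncurry w)) (x,t)
        - α * DD (1,0) (Function.uncurry w) (x,t))
  + (1-α) * DD (1,0) (DD (1,0) (DD (1,0) (Function.uncurry w))) (x,t)
      * DD (1,0) (Function.uncurry w) (x,t)
  + (1-α) * DD (1,0) (DD (1,0) (Function.uncurry w)) (x,t)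
      * DD (1,0) (DD (1,0) (Function.uncurry w)) (x,t)
  + (1/2) * (DD (1,0) (DD (1,0) (Function.uncurry w)) (x,t))^2
  + x * DD (1,0) (DD (1,0) (Function.uncurry w)) (x,t)
      * DD (1,0) (DD (1,0) (DD (1,0) (Function.uncurry w))) (x,t)

section HFacts

variable {w : ℝ → ℝ → ℝ} (hw : ContDiff ℝ 4 (Function.uncurry w)) (α : ℝ)

local notation "f" => Function.uncurry w

include hw

lemma hasDerivAt_HFun (t x : ℝ) : HasDerivAt (HFun w α t) (HFun' w α t x) x := by
  have k0 : HasDerivAt (fun y => f (y, t)) (DD (1,0) f (x,t)) x :=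
    hasDerivAt_slice_x (dw hw _)
  have k1 : HasDerivAt (fun y => DD (1,0) f (y, t)) (DD (1,0) (DD (1,0) f) (x,t)) x :=
    hasDerivAt_slice_x (dw3 hw _ _)
  have k2 : HasDerivAt (fun y => DD (0,1) f (y, t)) (DD (1,0) (DD (0,1) f) (x,t)) x :=
    hasDerivAt_slice_x (dw3 hw _ _)
  have k11 : HasDerivAt (fun y => DD (1,0) (DD (1,0) f) (y, t))
      (DD (1,0) (DD (1,0) (DD (1,0) f)) (x,t)) x := hasDerivAt_slice_x (dw2 hw _ _ _)
  have k12 : HasDerivAt (fun y => DD (1,0) (DD (0,1) f) (y, t))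
      (DD (1,0) (DD (1,0) (DD (0,1) f)) (x,t)) x := hasDerivAt_slice_x (dw2 hw _ _ _)
  have k111 : HasDerivAt (fun y => DD (1,0) (DD (1,0) (DD (1,0) f)) (y, t))
      (DD (1,0) (DD (1,0) (DD (1,0) (DD (1,0) f)))  (x,t)) x :=
    hasDerivAt_slice_x (dw1 hw _ _ _ _)
  have k212 : HasDerivAt (fun y => DD (0,1) (DD (1,0) (DD (0,1) f)) (y, t))
      (DD (1,0) (DD (0,1) (DD (1,0) (DD (0,1) f)))  (x,t)) x :=
    hasDerivAt_slice_x (dw1 hw _ _ _ _)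
  have hid : HasDerivAt (fun y : ℝ => y) 1 x := hasDerivAt_id x
  have T1 := (hid.const_mul (1/2 : ℝ)).mul (k2.pow 2)
  have T2 := (hid.const_mul (1/2 : ℝ)).mul (k12.pow 2)
  have T3 := (k212.sub k111).mul ((hid.mul k1).sub (k0.const_mul α))
  have T4 := (k11.mul k1).const_mul (1-α)
  have T5 := (hid.const_mul (1/2 : ℝ)).mul (k11.pow 2)
  have H := (((T1.add T2).add T3).add T4).add T5
  have e : HFun w α t = fun y =>
      (1/2) * y * (DD (0,1) f (y,t))^2
      + (1/2) * y * (DD (1,0) (DD (0,1) f) (y,t))^2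
      + (DD (0,1) (DD (1,0) (DD (0,1) f)) (y,t)
          - DD (1,0) (DD (1,0) (DD (1,0) f)) (y,t))
        * (y * DD (1,0) f (y,t) - α * f (y,t))
      + (1-α) * (DD (1,0) (DD (1,0) f) (y,t) * DD (1,0) f (y,t))
      + (1/2) * y * (DD (1,0) (DD (1,0) f) (y,t))^2 := by
    funext y; unfold HFun; ring
  rw [e]
  refine H.congr_deriv ?_
  unfold HFun'
  push_cast
  simp only [Pi.add_apply, Pi.sub_apply, Pi.mul_apply, Pi.pow_apply]
  ring

end HFacts

section Pointwise

variable {w : ℝ → ℝ → ℝ} (hw : ContDiff ℝ 4 (Function.uncurry w)) (α : ℝ)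

local notation "f" => Function.uncurry w

include hw

lemma phi_eq_H (x t : ℝ)
    (hpde' : DD (0,1) (DD (0,1) f) (x,t)
      + DD (1,0) (DD (1,0) (DD (1,0) (DD (1,0) f))) (x,t)
      - DD (1,0) (DD (1,0) (DD (0,1) (DD (0,1) f))) (x,t) = 0) :
    PhiJ' w α (x,t) = HFun' w α t x
      - ((1/2 + α) * (DD (0,1) f (x,t))^2
        + (α - 1/2) * (DD (1,0) (DD (0,1) f) (x,t))^2
        + (3/2 - α) * (DD (1,0) (DD (1,0) f) (x,t))^2) := by
  have hsub : DD (0,1) (DD (0,1) f) (x,t)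
      = DD (1,0) (DD (1,0) (DD (0,1) (DD (0,1) f))) (x,t)
        - DD (1,0) (DD (1,0) (DD (1,0) (DD (1,0) f))) (x,t) := by linarith
  unfold PhiJ' HFun'
  rw [sw1 hw, sw2 hw, sw3 hw]
  simp only []
  rw [hsub]
  ring

lemma contHFun' (t : ℝ) : Continuous (fun x => HFun' w α t x) := by
  have c0 : Continuous f := hw.continuous
  have c1 : Continuous (DD ((1:ℝ),(0:ℝ)) f) := (hw3 hw _).continuous
  have c2 : Continuous (DD ((0:ℝ),(1:ℝ)) f) := (hw3 hw _).continuous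
  have c12 : Continuous (DD ((1:ℝ),(0:ℝ)) (DD ((0:ℝ),(1:ℝ)) f)) := (hw2 hw _ _).continuous
  have c11 : Continuous (DD ((1:ℝ),(0:ℝ)) (DD ((1:ℝ),(0:ℝ)) f)) := (hw2 hw _ _).continuous
  have c112 : Continuous (DD ((1:ℝ),(0:ℝ)) (DD ((1:ℝ),(0:ℝ)) (DD ((0:ℝ),(1:ℝ)) f))) :=
    (hw1 hw _ _ _).continuous
  have c111 : Continuous (DD ((1:ℝ),(0:ℝ)) (DD ((1:ℝ),(0:ℝ)) (DD ((1:ℝ),(0:ℝ)) f))) :=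
    (hw1 hw _ _ _).continuous
  have c212 : Continuous (DD ((0:ℝ),(1:ℝ)) (DD ((1:ℝ),(0:ℝ)) (DD ((0:ℝ),(1:ℝ)) f))) :=
    (hw1 hw _ _ _).continuous
  have c1212 : Continuous
      (DD ((1:ℝ),(0:ℝ)) (DD ((0:ℝ),(1:ℝ)) (DD ((1:ℝ),(0:ℝ)) (DD ((0:ℝ),(1:ℝ)) f)))) :=
    (hw0 hw _ _ _ _).continuous
  have c1111 : Continuous
      (DD ((1:ℝ),(0:ℝ)) (DD ((1:ℝ),(0:ℝ)) (DD ((1:ℝ),(0:ℝ)) (DD ((1:ℝ),(0:ℝ)) f)))) :=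
    (hw0 hw _ _ _ _).continuous
  unfold HFun'
  fun_prop

lemma contTower1 (t : ℝ) : Continuous (fun x => DD ((0:ℝ),(1:ℝ)) f (x,t)) := by
  have c2 : Continuous (DD ((0:ℝ),(1:ℝ)) f) := (hw3 hw _).continuous
  fun_prop

lemma contTower12 (t : ℝ) : Continuous (fun x => DD ((1:ℝ),(0:ℝ)) (DD ((0:ℝ),(1:ℝ)) f) (x,t)) := by
  have c12 : Continuous (DD ((1:ℝ),(0:ℝ)) (DD ((0:ℝ),(1:ℝ)) f)) := (hw2 hw _ _).continuous
  fun_prop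

lemma contTower11 (t : ℝ) : Continuous (fun x => DD ((1:ℝ),(0:ℝ)) (DD ((1:ℝ),(0:ℝ)) f) (x,t)) := by
  have c11 : Continuous (DD ((1:ℝ),(0:ℝ)) (DD ((1:ℝ),(0:ℝ)) f)) := (hw2 hw _ _).continuous
  fun_prop

end Pointwise

/-- Derivative of the auxiliary functional ϱ along solutions of the Rayleigh beam
with held boundary inputs c₁, c₂. -/
theorem stmt_6 (a b α K₁ K₂ c₁ c₂ : ℝ) (hα : 1/2 < α ∧ α < 1) (w : ℝ → ℝ → ℝ)
    (hw : ContDiff ℝ 4 (Function.uncurry w))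
    (hpde : ∀ x ∈ Set.Icc (0:ℝ) 1, ∀ t ∈ Set.Ioo a b,
      ptt w x t + pxxxx w x t - pxxtt w x t = 0)
    (hbc0 : ∀ t ∈ Set.Ioo a b, w 0 t = 0 ∧ px w 0 t = 0)
    (hbc1 : ∀ t ∈ Set.Ioo a b, pxx w 1 t = -K₁ * c₁)
    (hbc2 : ∀ t ∈ Set.Ioo a b, pxtt w 1 t - pxxx w 1 t = -K₂ * c₂) :
    ∀ t ∈ Set.Ioo a b,
      HasDerivAt (rhoFun w α)
        ((1/2) * (pt w 1 t) ^ 2 - (1/2 + α) * (∫ x in (0:ℝ)..1, (pt w x t) ^ 2)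
          - (α - 1/2) * (∫ x in (0:ℝ)..1, (pxt w x t) ^ 2)
          + (1/2) * (pxt w 1 t) ^ 2
          - (3/2 - α) * (∫ x in (0:ℝ)..1, (pxx w x t) ^ 2)
          - (1/2) * (pxx w 1 t) ^ 2
          - K₂ * c₂ * px w 1 t + K₂ * α * c₂ * w 1 t
          - K₁ * (1 - α) * c₁ * px w 1 t + K₁ ^ 2 * c₁ ^ 2) t := by
  intro t ht
  have hd := hasDerivAt_rho hw α t
  have hIt : (∫ x in (0:ℝ)..1, (pt w x t)^2)
      = ∫ x in (0:ℝ)..1, (DD (0,1) (Function.uncurry w) (x,t))^2 :=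
    intervalIntegral.integral_congr (fun x _ => by rw [ept hw])
  have hIxt : (∫ x in (0:ℝ)..1, (pxt w x t)^2)
      = ∫ x in (0:ℝ)..1, (DD (1,0) (DD (0,1) (Function.uncurry w)) (x,t))^2 :=
    intervalIntegral.integral_congr (fun x _ => by rw [epxt hw])
  have hIxx : (∫ x in (0:ℝ)..1, (pxx w x t)^2)
      = ∫ x in (0:ℝ)..1, (DD (1,0) (DD (1,0) (Function.uncurry w)) (x,t))^2 :=
    intervalIntegral.integral_congr (fun x _ => by rw [epxx hw])
  have hpde' : ∀ x ∈ Icc (0:ℝ) 1,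
      DD (0,1) (DD (0,1) (Function.uncurry w)) (x,t)
      + DD (1,0) (DD (1,0) (DD (1,0) (DD (1,0) (Function.uncurry w)))) (x,t)
      - DD (1,0) (DD (1,0) (DD (0,1) (DD (0,1) (Function.uncurry w))))  (x,t) = 0 := by
    intro x hx
    have h := hpde x hx t ht
    rwa [eptt hw, epxxxx hw, epxxtt hw] at h
  have hintH : IntervalIntegrable (fun x => HFun' w α t x) MeasureTheory.volume 0 1 :=
    ((contHFun' hw α t)).intervalIntegrable 0 1
  have cS1 : Continuous (fun x => (1/2 + α) * (DD (0,1) (Function.uncurry w) (x,t))^2) :=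
    continuous_const.mul ((contTower1 hw t).pow 2)
  have cS2 : Continuous
      (fun x => (α - 1/2) * (DD (1,0) (DD (0,1) (Function.uncurry w)) (x,t))^2) :=
    continuous_const.mul ((contTower12 hw t).pow 2)
  have cS3 : Continuous
      (fun x => (3/2 - α) * (DD (1,0) (DD (1,0) (Function.uncurry w)) (x,t))^2) :=
    continuous_const.mul ((contTower11 hw t).pow 2)
  have hintS : IntervalIntegrable
      (fun x => (1/2 + α) * (DD (0,1) (Function.uncurry w) (x,t))^2
        + (α - 1/2) * (DD (1,0) (DD (0,1) (Function.uncurry w)) (x,t))^2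
        + (3/2 - α) * (DD (1,0) (DD (1,0) (Function.uncurry w)) (x,t))^2)
      MeasureTheory.volume 0 1 := ((cS1.add cS2).add cS3).intervalIntegrable 0 1
  have hkey : (∫ x in (0:ℝ)..1, PhiJ' w α (x,t))
      = (1/2) * (pt w 1 t) ^ 2 - (1/2 + α) * (∫ x in (0:ℝ)..1, (pt w x t) ^ 2)
          - (α - 1/2) * (∫ x in (0:ℝ)..1, (pxt w x t) ^ 2)
          + (1/2) * (pxt w 1 t) ^ 2
          - (3/2 - α) * (∫ x in (0:ℝ)..1, (pxx w x t) ^ 2)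
          - (1/2) * (pxx w 1 t) ^ 2
          - K₂ * c₂ * px w 1 t + K₂ * α * c₂ * w 1 t
          - K₁ * (1 - α) * c₁ * px w 1 t + K₁ ^ 2 * c₁ ^ 2 := by
    have step1 : (∫ x in (0:ℝ)..1, PhiJ' w α (x,t))
        = ∫ x in (0:ℝ)..1, (HFun' w α t x
          - ((1/2 + α) * (DD (0,1) (Function.uncurry w) (x,t))^2
            + (α - 1/2) * (DD (1,0) (DD (0,1) (Function.uncurry w)) (x,t))^2
            + (3/2 - α) * (DD (1,0) (DD (1,0) (Function.uncurry w)) (x,t))^2)) := by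
      apply intervalIntegral.integral_congr
      intro x hx
      rw [Set.uIcc_of_le (by norm_num : (0:ℝ) ≤ 1)] at hx
      exact phi_eq_H hw α x t (hpde' x hx)
    have step2 := intervalIntegral.integral_sub hintH hintS
    have step3 : (∫ x in (0:ℝ)..1, HFun' w α t x) = HFun w α t 1 - HFun w α t 0 :=
      intervalIntegral.integral_eq_sub_of_hasDerivAt
        (fun x _ => hasDerivAt_HFun hw α t x) hintH
    have step4 : (∫ x in (0:ℝ)..1,
        ((1/2 + α) * (DD (0,1) (Function.uncurry w) (x,t))^2
          + (α - 1/2) * (DD (1,0) (DD (0,1) (Function.uncurry w)) (x,t))^2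
          + (3/2 - α) * (DD (1,0) (DD (1,0) (Function.uncurry w)) (x,t))^2))
        = (1/2 + α) * (∫ x in (0:ℝ)..1, (DD (0,1) (Function.uncurry w) (x,t))^2)
          + (α - 1/2) * (∫ x in (0:ℝ)..1, (DD (1,0) (DD (0,1) (Function.uncurry w)) (x,t))^2)
          + (3/2 - α) * (∫ x in (0:ℝ)..1, (DD (1,0) (DD (1,0) (Function.uncurry w)) (x,t))^2) := by
      rw [intervalIntegral.integral_add ((cS1.fun_add cS2).intervalIntegrable 0 1)
          (cS3.intervalIntegrable 0 1),
        intervalIntegral.integral_add (cS1.intervalIntegrable 0 1)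
          (cS2.intervalIntegrable 0 1),
        intervalIntegral.integral_const_mul, intervalIntegral.integral_const_mul,
        intervalIntegral.integral_const_mul]
    have b0 : Function.uncurry w (0,t) = 0 := (hbc0 t ht).1
    have b0' : DD ((1:ℝ),(0:ℝ)) (Function.uncurry w) (0,t) = 0 := by
      rw [← epx hw]; exact (hbc0 t ht).2
    have b1 : DD ((1:ℝ),(0:ℝ)) (DD ((1:ℝ),(0:ℝ)) (Function.uncurry w)) (1,t) = -K₁ * c₁ := by
      rw [← epxx hw]; exact hbc1 t ht
    have b2 : DD ((0:ℝ),(1:ℝ)) (DD ((1:ℝ),(0:ℝ)) (DD ((0:ℝ),(1:ℝ)) (Function.uncurry w))) (1,t)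
        - DD ((1:ℝ),(0:ℝ)) (DD ((1:ℝ),(0:ℝ)) (DD ((1:ℝ),(0:ℝ)) (Function.uncurry w))) (1,t)
        = -K₂ * c₂ := by
      rw [← epxtt hw, ← epxxx hw]; exact hbc2 t ht
    rw [step1, step2, step3, step4, hIt, hIxt, hIxx]
    simp only [ept hw, epx hw, epxt hw, epxx hw, HFun]
    rw [show w 1 t = Function.uncurry w (1,t) from rfl, b0, b0', b1]
    linear_combination (DD ((1:ℝ),(0:ℝ)) (Function.uncurry w) (1,t)
      - α * Function.uncurry w (1,t)) * b2
  exact hkey ▸ hd
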